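/- Let W : ℝ² → ℝ satisfy assumptions (A0)–(A2), let ρ^ini ∈ 𝒫₂(ℝ²), and consider the finite volume scheme with initial values ρ⁰_{ij} = (1/(ΔxΔy)) ρ^ini(C_{ij}). If the CFL condition w_∞ (1/Δx + 1/Δy) Δt ≤ 1/2 holds, then for all n ∈ ℕ and all i, j ∈ ℤ: ρ^n_{ij} ≥ 0, |a_x{}^n_{ij}| ≤ w_∞, and |a_y{}^n_{ij}| ≤ w_∞. -/

import Mathlib

open MeasureTheory Filter Metric
open scoped RealInnerProductSpace Topology BigOperators NNReal ENNReal Classical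

noncomputable section

/-- The extended gradient `∇̂W`: `∇W(x)` for `x ≠ 0` and `0` at the origin. -/
def hatGrad (d : ℕ) (W : EuclideanSpace ℝ (Fin d) → ℝ) (x : EuclideanSpace ℝ (Fin d)) :
    EuclideanSpace ℝ (Fin d) :=
  if x = 0 then 0 else gradient W x

/-- Assumptions (A0)-(A2): `W` is Lipschitz with constant `winf ≥ 0`, even, `W 0 = 0`,
`lam`-convex for some `lam ≤ 0`, continuously differentiable away from the origin,
with gradient bounded by `winf` away from the origin. -/
structure PointyPotential (d : ℕ) (W : EuclideanSpace ℝ (Fin d) → ℝ) (winf lam : ℝ) : Prop where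
  winf_nonneg : 0 ≤ winf
  lipschitz : LipschitzWith (Real.toNNReal winf) W
  even : ∀ x, W (-x) = W x
  zero_val : W 0 = 0
  lam_nonpos : lam ≤ 0
  lamConvex : ConvexOn ℝ Set.univ fun x => W x - lam / 2 * ‖x‖ ^ 2
  diffAway : ∀ x : EuclideanSpace ℝ (Fin d), x ≠ 0 → DifferentiableAt ℝ W x
  gradContinuous : ContinuousOn (gradient W) {x : EuclideanSpace ℝ (Fin d) | x ≠ 0}
  gradBound : ∀ x : EuclideanSpace ℝ (Fin d), x ≠ 0 → ‖gradient W x‖ ≤ winf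

/-- The grid cell `C_{ij} = [iΔx,(i+1)Δx) × [jΔy,(j+1)Δy)` as a subset of `ℝ²`. -/
def cell2 (dx dy : ℝ) (i j : ℤ) : Set (EuclideanSpace ℝ (Fin 2)) :=
  {p : EuclideanSpace ℝ (Fin 2) |
    p 0 ∈ Set.Ico ((i : ℝ) * dx) (((i : ℝ) + 1) * dx) ∧
    p 1 ∈ Set.Ico ((j : ℝ) * dy) (((j : ℝ) + 1) * dy)}

/-- `D_cW_{ij}^{kl} = ∬_{C_{kl}} ∬_{C_{ij}} ∂̂_cW(p − q) dp dq`, where `c = 0` gives the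
`x`-component `∂̂_xW` and `c = 1` the `y`-component `∂̂_yW` of the extended gradient. -/
def DW (W : EuclideanSpace ℝ (Fin 2) → ℝ) (dx dy : ℝ) (c : Fin 2) (i j k l : ℤ) : ℝ :=
  ∫ q in cell2 dx dy k l, ∫ p in cell2 dx dy i j, hatGrad 2 W (p - q) c

/-- The discrete velocity `a_c{}_{ij} = (1/(ΔxΔy)) Σ_{k,ℓ} ρ_{kℓ} D_cW_{ij}^{kℓ}`. -/
def discVel (W : EuclideanSpace ℝ (Fin 2) → ℝ) (dx dy : ℝ) (ρ : ℤ → ℤ → ℝ) (c : Fin 2)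
    (i j : ℤ) : ℝ :=
  (1 / (dx * dy)) * ∑' k : ℤ, ∑' l : ℤ, ρ k l * DW W dx dy c i j k l

/-- One step of the finite volume scheme (Lax–Friedrichs type update rule). -/
def fvStep (W : EuclideanSpace ℝ (Fin 2) → ℝ) (winf dx dy dt : ℝ) (ρ : ℤ → ℤ → ℝ)
    (i j : ℤ) : ℝ :=
  let ax : ℤ → ℤ → ℝ := fun i j => discVel W dx dy ρ 0 i j
  let ay : ℤ → ℤ → ℝ := fun i j => discVel W dx dy ρ 1 i j
  -- half-index quantities: `axh i j = a_x{}_{i+1/2,j}`, `ρxh i j = ρ_{i+1/2,j}`, etc.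
  let axh : ℤ → ℤ → ℝ := fun i j => (ax i j + ax (i + 1) j) / 2
  let ayh : ℤ → ℤ → ℝ := fun i j => (ay i j + ay i (j + 1)) / 2
  let ρxh : ℤ → ℤ → ℝ := fun i j => (ρ i j + ρ (i + 1) j) / 2
  let ρyh : ℤ → ℤ → ℝ := fun i j => (ρ i j + ρ i (j + 1)) / 2
  ρ i j - (dt / dx) * (axh i j * ρxh i j - axh (i - 1) j * ρxh (i - 1) j)
        - (dt / dy) * (ayh i j * ρyh i j - ayh i (j - 1) * ρyh i (j - 1))
        + (dt * winf / (2 * dx)) * (ρ (i + 1) j - 2 * ρ i j + ρ (i - 1) j)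
        + (dt * winf / (2 * dy)) * (ρ i (j + 1) - 2 * ρ i j + ρ i (j - 1))

/-- The finite volume approximation `ρ^n_{ij}`, initialized by cell averages of `ρini`. -/
def fvRho (W : EuclideanSpace ℝ (Fin 2) → ℝ) (winf dx dy dt : ℝ)
    (ρini : Measure (EuclideanSpace ℝ (Fin 2))) : ℕ → ℤ → ℤ → ℝ
  | 0 => fun i j => (ρini (cell2 dx dy i j)).toReal / (dx * dy)
  | n + 1 => fun i j => fvStep W winf dx dy dt (fvRho W winf dx dy dt ρini n) i j

/-- `μ ∈ 𝒫₂(ℝ²)`: a Borel probability measure with finite second moment. -/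
def MemP2 {d : ℕ} (μ : Measure (EuclideanSpace ℝ (Fin d))) : Prop :=
  IsProbabilityMeasure μ ∧ Integrable (fun x => ‖x‖ ^ 2) μ


/-! ### Auxiliary lemmas -/

section Aux

lemma abs_apply_le_norm' (x : EuclideanSpace ℝ (Fin 2)) (c : Fin 2) : |x c| ≤ ‖x‖ := by
  rw [EuclideanSpace.norm_eq, ← Real.sqrt_sq_eq_abs]
  apply Real.sqrt_le_sqrt
  have := Finset.single_le_sum (f := fun i : Fin 2 => ‖x i‖ ^ 2) (fun i _ => sq_nonneg _)
    (Finset.mem_univ c)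
  simpa [Real.norm_eq_abs, sq_abs] using this

lemma hatGrad_norm_le {W : EuclideanSpace ℝ (Fin 2) → ℝ} {winf lam : ℝ}
    (hW : PointyPotential 2 W winf lam) (x : EuclideanSpace ℝ (Fin 2)) :
    ‖hatGrad 2 W x‖ ≤ winf := by
  unfold hatGrad
  split
  · simpa using hW.winf_nonneg
  · exact hW.gradBound x (by assumption)

lemma cell2_eq_preimage (dx dy : ℝ) (i j : ℤ) :
    cell2 dx dy i j = (MeasurableEquiv.toLp 2 (Fin 2 → ℝ)).symm ⁻¹'
      (Set.univ.pi fun c : Fin 2 => if c = 0 then Set.Ico ((i : ℝ) * dx) (((i : ℝ) + 1) * dx)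
        else Set.Ico ((j : ℝ) * dy) (((j : ℝ) + 1) * dy)) := by
  ext p
  simp only [cell2, Set.mem_preimage, Set.mem_pi, Set.mem_univ, forall_true_left, Set.mem_setOf_eq]
  constructor
  · rintro ⟨h0, h1⟩ c
    fin_cases c
    · exact h0
    · exact h1
  · intro h
    refine ⟨?_, ?_⟩
    · simpa using h 0
    · simpa using h 1

lemma measurableSet_cell2 (dx dy : ℝ) (i j : ℤ) : MeasurableSet (cell2 dx dy i j) := by
  rw [cell2_eq_preimage]
  exact (MeasurableEquiv.toLp 2 (Fin 2 → ℝ)).symm.measurable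
    (MeasurableSet.univ_pi fun c => by split <;> exact measurableSet_Ico)

lemma volume_cell2 (dx dy : ℝ) (hdx : 0 < dx) (hdy : 0 < dy) (i j : ℤ) :
    volume (cell2 dx dy i j) = ENNReal.ofReal (dx * dy) := by
  rw [cell2_eq_preimage,
    (EuclideanSpace.volume_preserving_symm_measurableEquiv_toLp (Fin 2)).measure_preimage
      ((MeasurableSet.univ_pi fun c => by split <;> exact measurableSet_Ico).nullMeasurableSet),
    volume_pi_pi]
  rw [Fin.prod_univ_two]
  norm_num [Real.volume_Ico]
  rw [← ENNReal.ofReal_mul (by nlinarith)]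
  congr 1 <;> ring

lemma Ico_int_disjoint {d : ℝ} (hd : 0 < d) {i k : ℤ} (hik : i ≠ k) :
    Disjoint (Set.Ico ((i : ℝ) * d) (((i : ℝ) + 1) * d))
      (Set.Ico ((k : ℝ) * d) (((k : ℝ) + 1) * d)) := by
  rw [Set.disjoint_left]
  rintro x ⟨hi1, hi2⟩ ⟨hk1, hk2⟩
  rcases lt_or_gt_of_ne hik with h | h
  · have h1 : (i : ℝ) + 1 ≤ (k : ℝ) := by exact_mod_cast h
    have : ((i : ℝ) + 1) * d ≤ (k : ℝ) * d := mul_le_mul_of_nonneg_right h1 hd.le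
    linarith
  · have h1 : (k : ℝ) + 1 ≤ (i : ℝ) := by exact_mod_cast h
    have : ((k : ℝ) + 1) * d ≤ (i : ℝ) * d := mul_le_mul_of_nonneg_right h1 hd.le
    linarith

lemma cell2_pairwise_disjoint {dx dy : ℝ} (hdx : 0 < dx) (hdy : 0 < dy) :
    Pairwise (Function.onFun Disjoint fun p : ℤ × ℤ => cell2 dx dy p.1 p.2) := by
  rintro ⟨i, j⟩ ⟨k, l⟩ hne
  rw [Function.onFun, Set.disjoint_left]
  rintro p ⟨h0, h1⟩ ⟨h0', h1'⟩
  rcases eq_or_ne i k with rfl | hik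
  · rcases eq_or_ne j l with rfl | hjl
    · exact hne rfl
    · exact (Ico_int_disjoint hdy hjl).le_bot ⟨h1, h1'⟩
  · exact (Ico_int_disjoint hdx hik).le_bot ⟨h0, h0'⟩

lemma abs_DW_le {W : EuclideanSpace ℝ (Fin 2) → ℝ} {winf lam dx dy : ℝ}
    (hW : PointyPotential 2 W winf lam)
    (hdx : 0 < dx) (hdy : 0 < dy) (c : Fin 2) (i j k l : ℤ) :
    |DW W dx dy c i j k l| ≤ winf * (dx * dy) * (dx * dy) := by
  have hvol : ∀ (a b : ℤ),
      (volume.restrict (cell2 dx dy a b)) Set.univ = ENNReal.ofReal (dx * dy) := by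
    intro a b; rw [Measure.restrict_apply_univ, volume_cell2 dx dy hdx hdy]
  have hfin : ∀ (a b : ℤ), IsFiniteMeasure (volume.restrict (cell2 dx dy a b)) := by
    intro a b
    exact ⟨by rw [hvol]; exact ENNReal.ofReal_lt_top⟩
  have hbound : ∀ (q : EuclideanSpace ℝ (Fin 2)),
      ‖∫ p in cell2 dx dy i j, hatGrad 2 W (p - q) c‖ ≤ winf * (dx * dy) := by
    intro q
    have := hfin i j
    have h := norm_integral_le_of_norm_le_const (μ := volume.restrict (cell2 dx dy i j))
      (f := fun p => hatGrad 2 W (p - q) c) (C := winf) ?_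
    · rw [measureReal_def, hvol i j, ENNReal.toReal_ofReal (by positivity)] at h
      exact h
    · filter_upwards with p
      exact (abs_apply_le_norm' _ c).trans (hatGrad_norm_le hW _)
  have := hfin k l
  have h := norm_integral_le_of_norm_le_const (μ := volume.restrict (cell2 dx dy k l))
    (f := fun q => ∫ p in cell2 dx dy i j, hatGrad 2 W (p - q) c) (C := winf * (dx * dy))
    (by filter_upwards with q using hbound q)
  rw [measureReal_def, hvol k l, ENNReal.toReal_ofReal (by positivity)] at h
  exact h

/-- The invariant propagated by the scheme. -/
def GoodState (dx dy : ℝ) (ρ : ℤ → ℤ → ℝ) : Prop :=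
  (∀ i j, 0 ≤ ρ i j) ∧ Summable (fun p : ℤ × ℤ => ρ p.1 p.2) ∧
    ∑' p : ℤ × ℤ, ρ p.1 p.2 ≤ 1 / (dx * dy)

lemma abs_discVel_le {W : EuclideanSpace ℝ (Fin 2) → ℝ} {winf lam dx dy : ℝ}
    (hW : PointyPotential 2 W winf lam) (hdx : 0 < dx) (hdy : 0 < dy)
    {ρ : ℤ → ℤ → ℝ} (hg : GoodState dx dy ρ) (c : Fin 2) (i j : ℤ) :
    |discVel W dx dy ρ c i j| ≤ winf := by
  obtain ⟨hρ, hsum, hmass⟩ := hg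
  set C := winf * (dx * dy) * (dx * dy) with hC
  have hw : 0 ≤ winf := hW.winf_nonneg
  have hCnn : 0 ≤ C := by positivity
  have hbd : ∀ p : ℤ × ℤ, ‖ρ p.1 p.2 * DW W dx dy c i j p.1 p.2‖ ≤ C * ρ p.1 p.2 := by
    intro p
    rw [Real.norm_eq_abs, abs_mul, abs_of_nonneg (hρ _ _)]
    calc ρ p.1 p.2 * |DW W dx dy c i j p.1 p.2| ≤ ρ p.1 p.2 * C :=
          mul_le_mul_of_nonneg_left (abs_DW_le hW hdx hdy c i j p.1 p.2) (hρ _ _)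
      _ = C * ρ p.1 p.2 := mul_comm _ _
  have hsC : Summable (fun p : ℤ × ℤ => C * ρ p.1 p.2) := hsum.mul_left C
  have hs2 : Summable (fun p : ℤ × ℤ => ρ p.1 p.2 * DW W dx dy c i j p.1 p.2) :=
    Summable.of_norm_bounded hsC hbd
  have heq : ∑' k : ℤ, ∑' l : ℤ, ρ k l * DW W dx dy c i j k l
      = ∑' p : ℤ × ℤ, ρ p.1 p.2 * DW W dx dy c i j p.1 p.2 :=
    (Summable.tsum_prod' hs2 fun b => (hs2.prod_factor b)).symm
  rw [discVel, heq, abs_mul, abs_of_nonneg (by positivity : (0:ℝ) ≤ 1 / (dx * dy))]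
  have h1 : |∑' p : ℤ × ℤ, ρ p.1 p.2 * DW W dx dy c i j p.1 p.2| ≤ C * (1 / (dx * dy)) := by
    calc |∑' p : ℤ × ℤ, ρ p.1 p.2 * DW W dx dy c i j p.1 p.2|
        ≤ ∑' p : ℤ × ℤ, ‖ρ p.1 p.2 * DW W dx dy c i j p.1 p.2‖ :=
          norm_tsum_le_tsum_norm hs2.norm
      _ ≤ ∑' p : ℤ × ℤ, C * ρ p.1 p.2 := Summable.tsum_le_tsum hbd hs2.norm hsC
      _ = C * ∑' p : ℤ × ℤ, ρ p.1 p.2 := tsum_mul_left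
      _ ≤ C * (1 / (dx * dy)) := mul_le_mul_of_nonneg_left hmass hCnn
  calc 1 / (dx * dy) * |∑' p : ℤ × ℤ, ρ p.1 p.2 * DW W dx dy c i j p.1 p.2|
      ≤ 1 / (dx * dy) * (C * (1 / (dx * dy))) := mul_le_mul_of_nonneg_left h1 (by positivity)
    _ = winf := by field_simp [hC]; rw [hC]; ring

lemma step_core {winf dx dy dt : ℝ} (hdx : 0 < dx) (hdy : 0 < dy) (hdt : 0 < dt)
    (hw : 0 ≤ winf) (hCFL : winf * (1 / dx + 1 / dy) * dt ≤ 1 / 2)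
    {A1 A0 B1 B0 r rE rW rN rS : ℝ}
    (hA1 : |A1| ≤ winf) (hA0 : |A0| ≤ winf) (hB1 : |B1| ≤ winf) (hB0 : |B0| ≤ winf)
    (hr : 0 ≤ r) (hrE : 0 ≤ rE) (hrW : 0 ≤ rW) (hrN : 0 ≤ rN) (hrS : 0 ≤ rS) :
    0 ≤ r - dt / dx * (A1 * ((r + rE) / 2) - A0 * ((rW + r) / 2))
        - dt / dy * (B1 * ((r + rN) / 2) - B0 * ((rS + r) / 2))
        + dt * winf / (2 * dx) * (rE - 2 * r + rW)
        + dt * winf / (2 * dy) * (rN - 2 * r + rS) := by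
  rw [abs_le] at hA1 hA0 hB1 hB0
  obtain ⟨hA1l, hA1r⟩ := hA1
  obtain ⟨hA0l, hA0r⟩ := hA0
  obtain ⟨hB1l, hB1r⟩ := hB1
  obtain ⟨hB0l, hB0r⟩ := hB0
  have key : r - dt / dx * (A1 * ((r + rE) / 2) - A0 * ((rW + r) / 2))
        - dt / dy * (B1 * ((r + rN) / 2) - B0 * ((rS + r) / 2))
        + dt * winf / (2 * dx) * (rE - 2 * r + rW)
        + dt * winf / (2 * dy) * (rN - 2 * r + rS)
      = r * (1 - dt / (2 * dx) * (A1 - A0) - dt / (2 * dy) * (B1 - B0)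
            - dt * winf / dx - dt * winf / dy)
        + rE * (dt / (2 * dx) * (winf - A1)) + rW * (dt / (2 * dx) * (winf + A0))
        + rN * (dt / (2 * dy) * (winf - B1)) + rS * (dt / (2 * dy) * (winf + B0)) := by
    field_simp
    ring
  rw [key]
  have hCFL' : dt * winf / dx + dt * winf / dy ≤ 1 / 2 := by
    have heq : winf * (1 / dx + 1 / dy) * dt = dt * winf / dx + dt * winf / dy := by
      field_simp
    linarith [hCFL, heq.symm.trans_le hCFL]
  have e1 : dt / (2 * dx) * (A1 - A0) ≤ dt / (2 * dx) * (2 * winf) :=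
    mul_le_mul_of_nonneg_left (by linarith) (by positivity)
  have e1' : dt / (2 * dx) * (2 * winf) = dt * winf / dx := by field_simp
  have e2 : dt / (2 * dy) * (B1 - B0) ≤ dt / (2 * dy) * (2 * winf) :=
    mul_le_mul_of_nonneg_left (by linarith) (by positivity)
  have e2' : dt / (2 * dy) * (2 * winf) = dt * winf / dy := by field_simp
  have c0 : 0 ≤ 1 - dt / (2 * dx) * (A1 - A0) - dt / (2 * dy) * (B1 - B0)
      - dt * winf / dx - dt * winf / dy := by
    rw [e1'] at e1; rw [e2'] at e2
    linarith
  have t0 := mul_nonneg hr c0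
  have t1 : 0 ≤ rE * (dt / (2 * dx) * (winf - A1)) :=
    mul_nonneg hrE (mul_nonneg (by positivity) (by linarith))
  have t2 : 0 ≤ rW * (dt / (2 * dx) * (winf + A0)) :=
    mul_nonneg hrW (mul_nonneg (by positivity) (by linarith))
  have t3 : 0 ≤ rN * (dt / (2 * dy) * (winf - B1)) :=
    mul_nonneg hrN (mul_nonneg (by positivity) (by linarith))
  have t4 : 0 ≤ rS * (dt / (2 * dy) * (winf + B0)) :=
    mul_nonneg hrS (mul_nonneg (by positivity) (by linarith))
  linarith

end Aux


section Aux2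

lemma half_abs_le {winf a b : ℝ} (h1 : |a| ≤ winf) (h2 : |b| ≤ winf) : |(a + b) / 2| ≤ winf := by
  rw [abs_div, abs_two]
  have := abs_add_le a b
  linarith

lemma flux_abs_le {winf d dt a r1 r2 : ℝ} (hd : 0 < d) (hdt : 0 < dt) (hw : 0 ≤ winf)
    (ha : |a| ≤ winf) (h1 : 0 ≤ r1) (h2 : 0 ≤ r2) :
    |dt / d * (a * ((r1 + r2) / 2)) - dt * winf / (2 * d) * (r2 - r1)|
      ≤ dt * winf / d * (r1 + r2) := by
  have hX : |dt / d * (a * ((r1 + r2) / 2))| ≤ dt / d * (winf * ((r1 + r2) / 2)) := by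
    rw [abs_mul, abs_of_pos (by positivity : (0:ℝ) < dt / d), abs_mul,
      abs_of_nonneg (by positivity : (0:ℝ) ≤ (r1 + r2) / 2)]
    exact mul_le_mul_of_nonneg_left (mul_le_mul_of_nonneg_right ha (by positivity))
      (by positivity)
  have hY : |dt * winf / (2 * d) * (r2 - r1)| ≤ dt * winf / (2 * d) * (r1 + r2) := by
    rw [abs_mul, abs_of_nonneg (by positivity : (0:ℝ) ≤ dt * winf / (2 * d))]
    refine mul_le_mul_of_nonneg_left ?_ (by positivity)
    rw [abs_le]
    constructor <;> linarith
  have hsum : dt / d * (winf * ((r1 + r2) / 2)) + dt * winf / (2 * d) * (r1 + r2)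
      = dt * winf / d * (r1 + r2) := by
    field_simp
    ring
  calc |dt / d * (a * ((r1 + r2) / 2)) - dt * winf / (2 * d) * (r2 - r1)|
      ≤ |dt / d * (a * ((r1 + r2) / 2))| + |dt * winf / (2 * d) * (r2 - r1)| := abs_sub _ _
    _ ≤ dt * winf / d * (r1 + r2) := by linarith

variable {W : EuclideanSpace ℝ (Fin 2) → ℝ} {winf lam dx dy dt : ℝ}

lemma fvStep_nonneg (hW : PointyPotential 2 W winf lam) (hdx : 0 < dx) (hdy : 0 < dy)
    (hdt : 0 < dt) (hCFL : winf * (1 / dx + 1 / dy) * dt ≤ 1 / 2)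
    {ρ : ℤ → ℤ → ℝ} (hg : GoodState dx dy ρ) (i j : ℤ) :
    0 ≤ fvStep W winf dx dy dt ρ i j := by
  have hρ := hg.1
  have ha := abs_discVel_le hW hdx hdy hg
  have hkey : fvStep W winf dx dy dt ρ i j
      = ρ i j - dt / dx * ((discVel W dx dy ρ 0 i j + discVel W dx dy ρ 0 (i + 1) j) / 2
            * ((ρ i j + ρ (i + 1) j) / 2)
          - (discVel W dx dy ρ 0 (i - 1) j + discVel W dx dy ρ 0 i j) / 2
            * ((ρ (i - 1) j + ρ i j) / 2))
        - dt / dy * ((discVel W dx dy ρ 1 i j + discVel W dx dy ρ 1 i (j + 1)) / 2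
            * ((ρ i j + ρ i (j + 1)) / 2)
          - (discVel W dx dy ρ 1 i (j - 1) + discVel W dx dy ρ 1 i j) / 2
            * ((ρ i (j - 1) + ρ i j) / 2))
        + dt * winf / (2 * dx) * (ρ (i + 1) j - 2 * ρ i j + ρ (i - 1) j)
        + dt * winf / (2 * dy) * (ρ i (j + 1) - 2 * ρ i j + ρ i (j - 1)) := by
    simp only [fvStep, sub_add_cancel]
  rw [hkey]
  exact step_core hdx hdy hdt hW.winf_nonneg hCFL
    (half_abs_le (ha 0 i j) (ha 0 (i + 1) j))
    (half_abs_le (ha 0 (i - 1) j) (ha 0 i j))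
    (half_abs_le (ha 1 i j) (ha 1 i (j + 1)))
    (half_abs_le (ha 1 i (j - 1)) (ha 1 i j))
    (hρ i j) (hρ (i + 1) j) (hρ (i - 1) j) (hρ i (j + 1)) (hρ i (j - 1))

lemma fvStep_preserves (hW : PointyPotential 2 W winf lam) (hdx : 0 < dx) (hdy : 0 < dy)
    (hdt : 0 < dt) (hCFL : winf * (1 / dx + 1 / dy) * dt ≤ 1 / 2)
    {ρ : ℤ → ℤ → ℝ} (hg : GoodState dx dy ρ) :
    GoodState dx dy (fvStep W winf dx dy dt ρ) := by
  obtain ⟨hρ, hsum, hmass⟩ := hg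
  have hw : 0 ≤ winf := hW.winf_nonneg
  have ha := abs_discVel_le hW hdx hdy ⟨hρ, hsum, hmass⟩
  set Hx : ℤ → ℤ → ℝ := fun i j =>
    dt / dx * ((discVel W dx dy ρ 0 i j + discVel W dx dy ρ 0 (i + 1) j) / 2
      * ((ρ i j + ρ (i + 1) j) / 2)) - dt * winf / (2 * dx) * (ρ (i + 1) j - ρ i j) with hHxdef
  set Hy : ℤ → ℤ → ℝ := fun i j =>
    dt / dy * ((discVel W dx dy ρ 1 i j + discVel W dx dy ρ 1 i (j + 1)) / 2
      * ((ρ i j + ρ i (j + 1)) / 2)) - dt * winf / (2 * dy) * (ρ i (j + 1) - ρ i j) with hHydef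
  have hid : ∀ i j, fvStep W winf dx dy dt ρ i j
      = ρ i j - (Hx i j - Hx (i - 1) j) - (Hy i j - Hy i (j - 1)) := by
    intro i j
    simp only [fvStep, hHxdef, hHydef, sub_add_cancel]
    ring
  -- shifted summability of ρ
  have hshx : Summable (fun p : ℤ × ℤ => ρ (p.1 + 1) p.2) := by
    have := (Equiv.summable_iff (Equiv.prodCongr (Equiv.addRight (1:ℤ)) (Equiv.refl ℤ))
      (f := fun p : ℤ × ℤ => ρ p.1 p.2)).2 hsum
    simpa [Function.comp_def] using this
  have hshy : Summable (fun p : ℤ × ℤ => ρ p.1 (p.2 + 1)) := by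
    have := (Equiv.summable_iff (Equiv.prodCongr (Equiv.refl ℤ) (Equiv.addRight (1:ℤ)))
      (f := fun p : ℤ × ℤ => ρ p.1 p.2)).2 hsum
    simpa [Function.comp_def] using this
  have hHx : Summable (fun p : ℤ × ℤ => Hx p.1 p.2) := by
    apply Summable.of_norm_bounded (g := fun p : ℤ × ℤ => dt * winf / dx * (ρ p.1 p.2 + ρ (p.1 + 1) p.2))
      ((hsum.add hshx).mul_left _)
    intro p
    exact flux_abs_le hdx hdt hw (half_abs_le (ha 0 p.1 p.2) (ha 0 (p.1 + 1) p.2))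
      (hρ p.1 p.2) (hρ (p.1 + 1) p.2)
  have hHy : Summable (fun p : ℤ × ℤ => Hy p.1 p.2) := by
    apply Summable.of_norm_bounded (g := fun p : ℤ × ℤ => dt * winf / dy * (ρ p.1 p.2 + ρ p.1 (p.2 + 1)))
      ((hsum.add hshy).mul_left _)
    intro p
    exact flux_abs_le hdy hdt hw (half_abs_le (ha 1 p.1 p.2) (ha 1 p.1 (p.2 + 1)))
      (hρ p.1 p.2) (hρ p.1 (p.2 + 1))
  have hHx' : Summable (fun p : ℤ × ℤ => Hx (p.1 - 1) p.2) := by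
    have := (Equiv.summable_iff (Equiv.prodCongr (Equiv.subRight (1:ℤ)) (Equiv.refl ℤ))
      (f := fun p : ℤ × ℤ => Hx p.1 p.2)).2 hHx
    simpa [Function.comp_def] using this
  have hHy' : Summable (fun p : ℤ × ℤ => Hy p.1 (p.2 - 1)) := by
    have := (Equiv.summable_iff (Equiv.prodCongr (Equiv.refl ℤ) (Equiv.subRight (1:ℤ)))
      (f := fun p : ℤ × ℤ => Hy p.1 p.2)).2 hHy
    simpa [Function.comp_def] using this
  have htsx : ∑' p : ℤ × ℤ, Hx (p.1 - 1) p.2 = ∑' p : ℤ × ℤ, Hx p.1 p.2 := by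
    have := Equiv.tsum_eq (Equiv.prodCongr (Equiv.subRight (1:ℤ)) (Equiv.refl ℤ))
      (fun p : ℤ × ℤ => Hx p.1 p.2)
    simpa [Function.comp] using this
  have htsy : ∑' p : ℤ × ℤ, Hy p.1 (p.2 - 1) = ∑' p : ℤ × ℤ, Hy p.1 p.2 := by
    have := Equiv.tsum_eq (Equiv.prodCongr (Equiv.refl ℤ) (Equiv.subRight (1:ℤ)))
      (fun p : ℤ × ℤ => Hy p.1 p.2)
    simpa [Function.comp] using this
  have hfun : (fun p : ℤ × ℤ => fvStep W winf dx dy dt ρ p.1 p.2)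
      = fun p : ℤ × ℤ => ρ p.1 p.2 - (Hx p.1 p.2 - Hx (p.1 - 1) p.2)
          - (Hy p.1 p.2 - Hy p.1 (p.2 - 1)) := funext fun p => hid p.1 p.2
  have hsum' : Summable (fun p : ℤ × ℤ => fvStep W winf dx dy dt ρ p.1 p.2) := by
    rw [hfun]
    exact (hsum.sub (hHx.sub hHx')).sub (hHy.sub hHy')
  refine ⟨fun i j => fvStep_nonneg hW hdx hdy hdt hCFL ⟨hρ, hsum, hmass⟩ i j, hsum', ?_⟩
  rw [hfun, Summable.tsum_sub (hsum.sub (hHx.sub hHx')) (hHy.sub hHy'),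
    Summable.tsum_sub hsum (hHx.sub hHx'), Summable.tsum_sub hHx hHx', Summable.tsum_sub hHy hHy', htsx, htsy]
  simpa using hmass

lemma good_init (hdx : 0 < dx) (hdy : 0 < dy)
    {ρini : Measure (EuclideanSpace ℝ (Fin 2))} (hini : MemP2 ρini) :
    GoodState dx dy (fun i j => (ρini (cell2 dx dy i j)).toReal / (dx * dy)) := by
  haveI : IsProbabilityMeasure ρini := hini.1
  have hU : ∑' p : ℤ × ℤ, ρini (cell2 dx dy p.1 p.2)
      = ρini (⋃ p : ℤ × ℤ, cell2 dx dy p.1 p.2) :=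
    (measure_iUnion (cell2_pairwise_disjoint hdx hdy)
      (fun p => measurableSet_cell2 dx dy p.1 p.2)).symm
  have hle : ∑' p : ℤ × ℤ, ρini (cell2 dx dy p.1 p.2) ≤ 1 := by
    rw [hU, ← measure_univ (μ := ρini)]
    exact measure_mono (Set.subset_univ _)
  have hne : ∑' p : ℤ × ℤ, ρini (cell2 dx dy p.1 p.2) ≠ ⊤ :=
    ne_top_of_le_ne_top ENNReal.one_ne_top hle
  have hsumt : Summable (fun p : ℤ × ℤ => (ρini (cell2 dx dy p.1 p.2)).toReal) :=
    ENNReal.summable_toReal hne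
  have htsum : ∑' p : ℤ × ℤ, (ρini (cell2 dx dy p.1 p.2)).toReal ≤ 1 := by
    rw [← ENNReal.tsum_toReal_eq (fun p => measure_ne_top _ _)]
    simpa using ENNReal.toReal_mono ENNReal.one_ne_top hle
  refine ⟨fun i j => by positivity, hsumt.div_const _, ?_⟩
  rw [tsum_div_const]
  gcongr

end Aux2

/-- CFL / positivity: under the CFL condition
`w_∞ (1/Δx + 1/Δy) Δt ≤ 1/2`, the finite volume scheme preserves nonnegativity and the
discrete velocities are bounded by `w_∞`. -/
theorem fv_scheme_positivity
    (W : EuclideanSpace ℝ (Fin 2) → ℝ) (winf lam : ℝ)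
    (hW : PointyPotential 2 W winf lam)
    (ρini : Measure (EuclideanSpace ℝ (Fin 2))) (hini : MemP2 ρini)
    (dx dy dt : ℝ) (hdx : 0 < dx) (hdy : 0 < dy) (hdt : 0 < dt)
    (hCFL : winf * (1 / dx + 1 / dy) * dt ≤ 1 / 2) :
    ∀ (n : ℕ) (i j : ℤ),
      0 ≤ fvRho W winf dx dy dt ρini n i j ∧
      |discVel W dx dy (fvRho W winf dx dy dt ρini n) 0 i j| ≤ winf ∧
      |discVel W dx dy (fvRho W winf dx dy dt ρini n) 1 i j| ≤ winf := by
  have hgood : ∀ n, GoodState dx dy (fvRho W winf dx dy dt ρini n) := by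
    intro n
    induction n with
    | zero => exact good_init hdx hdy hini
    | succ n ih =>
      simp only [fvRho]
      exact fvStep_preserves hW hdx hdy hdt hCFL ih
  intro n i j
  exact ⟨(hgood n).1 i j, abs_discVel_le hW hdx hdy (hgood n) 0 i j,
    abs_discVel_le hW hdx hdy (hgood n) 1 i j⟩
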